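/- For every ε ∈ (0, π), ω > 0 and integer k ≥ 0 there exist constants c_k, δ > 0, depending only on ε, ω and k, such that for all λ ∈ Σ_ε with |λ| ≥ ω, all s > 0 and all y ≥ 0, (1 + y) s^k |(d/ds)^k exp(−y √(λ + s²))| ≤ c_k e^{−δ s y}. (The k-th derivative in s is well defined, since for such λ one has λ + s² ∉ (−∞, 0] and the principal square root is smooth there.) -/

import Mathlib

open MeasureTheory Real

/-- Principal complex square root `√z = z^(1/2)` (principal branch of `cpow`). -/
noncomputable def csqrt (z : ℂ) : ℂ := z ^ (1/2 : ℂ)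

/-- The sector `Σ_ε = {λ ∈ ℂ : λ ≠ 0, |Arg λ| < π − ε}`. -/
def SigmaSector (ε : ℝ) : Set ℂ := {l : ℂ | l ≠ 0 ∧ |l.arg| < Real.pi - ε}

/-- Mikhlin condition (M) with constant `cbar`, with `K = ⌊(d+1)/2⌋`. -/
def CondM (d : ℕ) (m : EuclideanSpace ℝ (Fin (d-1)) → ℂ) (cbar : ℝ) : Prop :=
  ContDiffOn ℝ ((d+1)/2 : ℕ) m {ξ : EuclideanSpace ℝ (Fin (d-1)) | ξ ≠ 0} ∧
  ∀ k : ℕ, k ≤ (d+1)/2 → ∀ ξ : EuclideanSpace ℝ (Fin (d-1)), ξ ≠ 0 →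
    ‖ξ‖ ^ k * ‖iteratedFDerivWithin ℝ k m
        {ξ : EuclideanSpace ℝ (Fin (d-1)) | ξ ≠ 0} ξ‖ ≤ cbar

/-- Parameterized Mikhlin condition (M*) with constants `(cbar, δ)`, `K = ⌊(d+1)/2⌋`. -/
def CondMStar (d : ℕ) (m : EuclideanSpace ℝ (Fin (d-1)) → ℝ → ℂ) (cbar δ : ℝ) : Prop :=
  (∀ y : ℝ, 0 ≤ y →
    ContDiffOn ℝ ((d+1)/2 : ℕ) (fun ξ => m ξ y)
      {ξ : EuclideanSpace ℝ (Fin (d-1)) | ξ ≠ 0}) ∧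
  ∀ k : ℕ, k ≤ (d+1)/2 →
    ∀ ξ : EuclideanSpace ℝ (Fin (d-1)), ξ ≠ 0 → ∀ y : ℝ, 0 ≤ y →
      ‖ξ‖ ^ k * ‖iteratedFDerivWithin ℝ k (fun ξ => m ξ y)
          {ξ : EuclideanSpace ℝ (Fin (d-1)) | ξ ≠ 0} ξ‖ ≤
        cbar * Real.exp (-δ * ‖ξ‖ * y) / (1 + y)

/-- The fundamental multiplier `m₀(s, y)`. -/
noncomputable def m0 (l : ℂ) (α : ℝ) (s y : ℝ) : ℂ :=
  ((csqrt (l + (s:ℂ)^2) + s) / ((α:ℂ) + l + csqrt (l + (s:ℂ)^2) + s)) *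
    ((Complex.exp (-(y:ℂ) * csqrt (l + (s:ℂ)^2)) - Complex.exp (-(y:ℂ) * s)) / l)

/-- `E(s, y) = e^{-ys} - e^{-y√(λ+s²)}`. -/
noncomputable def Efun (l : ℂ) (s y : ℝ) : ℂ :=
  Complex.exp (-(y:ℂ) * s) - Complex.exp (-(y:ℂ) * csqrt (l + (s:ℂ)^2))

lemma csqrt_sq (z : ℂ) : (csqrt z) ^ 2 = z := by
  have := Complex.cpow_nat_inv_pow z (n := 2) (by norm_num)
  simpa [csqrt, one_div] using this

lemma re_csqrt_nonneg (z : ℂ) : 0 ≤ (csqrt z).re := by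
  rcases eq_or_ne z 0 with rfl | hz
  · simp [csqrt, Complex.zero_cpow (by norm_num : (1/2 : ℂ) ≠ 0)]
  · rw [csqrt, Complex.cpow_def_of_ne_zero hz, Complex.exp_re]
    apply mul_nonneg (Real.exp_pos _).le
    have h1 : (Complex.log z * (1/2)).im = z.arg / 2 := by
      simp [Complex.mul_im, Complex.log_im]
      ring
    rw [h1]
    apply Real.cos_nonneg_of_mem_Icc
    constructor
    · nlinarith [Complex.neg_pi_lt_arg z, Real.pi_pos]
    · nlinarith [Complex.arg_le_pi z]

lemma sq_re_csqrt {z : ℂ} (hz : z ≠ 0) :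
    (csqrt z).re ^ 2 = (‖z‖ + z.re) / 2 := by
  set w := csqrt z with hw
  have h2 : w ^ 2 = z := csqrt_sq z
  have hre : z.re = w.re ^ 2 - w.im ^ 2 := by
    rw [← h2]; simp [pow_two, Complex.mul_re]
  have habs : ‖z‖ = w.re ^ 2 + w.im ^ 2 := by
    rw [← h2, norm_pow, ← Complex.normSq_eq_norm_sq]
    simp [Complex.normSq_apply]; ring
  rw [hre, habs]; ring

lemma re_csqrt_ge {z : ℂ} {m : ℝ} (hm : 0 ≤ m) (h : m ≤ ‖z‖ + z.re) (hz : z ≠ 0) :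
    Real.sqrt (m / 2) ≤ (csqrt z).re := by
  have h1 := sq_re_csqrt hz
  have h2 := re_csqrt_nonneg z
  nlinarith [Real.sq_sqrt (by linarith : (0:ℝ) ≤ m/2), Real.sqrt_nonneg (m/2)]

open Metric in
lemma cauchy_est {f : ℂ → ℂ} {c : ℂ} {r M : ℝ} (hr : 0 < r)
    (hd : DifferentiableOn ℂ f (closedBall c r))
    (hb : ∀ z ∈ closedBall c r, ‖f z‖ ≤ M) (k : ℕ) :
    ‖iteratedDeriv k f c‖ ≤ (k.factorial : ℝ) * M / r ^ k := by
  have hM : 0 ≤ M := le_trans (norm_nonneg _) (hb c (mem_closedBall_self hr.le))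
  lift r to NNReal using hr.le with r' hr'
  have hr0 : (0:ℝ) < r' := hr
  have hdc : DiffContOnCl ℂ f (ball c r') := by
    apply DifferentiableOn.diffContOnCl
    rwa [closure_ball c hr0.ne']
  have hps := hdc.hasFPowerSeriesOnBall hr0
  have hfs := hps.factorial_smul (y := (1:ℂ)) k
  have h1 : iteratedDeriv k f c = k.factorial • (cauchyPowerSeries f c r' k fun _ => (1:ℂ)) := by
    rw [iteratedDeriv_eq_iteratedFDeriv, ← hfs]
  rw [h1]
  have h2 : ‖(k.factorial • (cauchyPowerSeries f c r' k fun _ => (1:ℂ)))‖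
      ≤ (k.factorial : ℝ) * ‖cauchyPowerSeries f c r' k‖ := by
    rw [nsmul_eq_mul, norm_mul, Complex.norm_natCast]
    gcongr
    calc ‖cauchyPowerSeries f c r' k fun _ => (1:ℂ)‖
        ≤ ‖cauchyPowerSeries f c r' k‖ * ∏ _i : Fin k, ‖(1:ℂ)‖ :=
          (cauchyPowerSeries f c r' k).le_opNorm _
      _ = ‖cauchyPowerSeries f c r' k‖ := by simp
  refine h2.trans ?_
  have h3 := norm_cauchyPowerSeries_le f c r' k
  have hint : (∫ θ : ℝ in (0)..2 * Real.pi, ‖f (circleMap c r' θ)‖) ≤ 2 * Real.pi * M := by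
    have hcont : Continuous fun θ : ℝ => ‖f (circleMap c r' θ)‖ := by
      apply Continuous.norm
      apply (hd.continuousOn).comp_continuous (continuous_circleMap c r')
      intro θ
      exact circleMap_mem_closedBall c hr0.le θ
    calc (∫ θ : ℝ in (0)..2 * Real.pi, ‖f (circleMap c r' θ)‖)
        ≤ ∫ _θ : ℝ in (0)..2 * Real.pi, M := by
          apply intervalIntegral.integral_mono_on Real.two_pi_pos.le
            (hcont.intervalIntegrable _ _) (intervalIntegrable_const)
          intro θ _
          exact hb _ (circleMap_mem_closedBall c hr0.le θ)
      _ = 2 * Real.pi * M := by simp [mul_comm]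
  have hA : (2 * Real.pi)⁻¹ * (∫ θ : ℝ in (0)..2 * Real.pi, ‖f (circleMap c r' θ)‖) ≤ M := by
    rw [inv_mul_le_iff₀ (by positivity)]
    exact hint
  have h4 : ‖cauchyPowerSeries f c r' k‖ ≤ M / r' ^ k := by
    refine h3.trans ?_
    rw [abs_of_pos hr0, div_eq_mul_inv, ← inv_pow]
    exact mul_le_mul_of_nonneg_right hA (by positivity)
  rw [mul_div_assoc]
  exact mul_le_mul_of_nonneg_left h4 (by positivity)

lemma iteratedDeriv_comp_ofReal' {f : ℂ → ℂ} {U : Set ℂ} (hU : IsOpen U)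
    (hf : DifferentiableOn ℂ f U) (k : ℕ) :
    ∀ s : ℝ, (s : ℂ) ∈ U → iteratedDeriv k (fun t : ℝ => f t) s = iteratedDeriv k f s := by
  induction k with
  | zero => intro s _; simp
  | succ k ih =>
    intro s hs
    have han : AnalyticOnNhd ℂ f U := hf.analyticOnNhd hU
    have hani : AnalyticOnNhd ℂ (iteratedDeriv k f) U := by
      rw [iteratedDeriv_eq_iterate]; exact han.iterated_deriv k
    rw [iteratedDeriv_succ, iteratedDeriv_succ]
    have heq : (fun x : ℝ => iteratedDeriv k (fun t : ℝ => f t) x) =ᶠ[nhds s]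
        (fun x : ℝ => iteratedDeriv k f x) := by
      have hop : IsOpen ((fun x : ℝ => (x : ℂ)) ⁻¹' U) := hU.preimage Complex.continuous_ofReal
      filter_upwards [hop.mem_nhds hs] with x hx using ih x hx
    rw [heq.deriv_eq]
    have hd : HasDerivAt (iteratedDeriv k f) (deriv (iteratedDeriv k f) (s : ℂ)) (s : ℂ) :=
      ((hani (s : ℂ) hs).differentiableAt).hasDerivAt
    exact hd.comp_ofReal.deriv


set_option maxHeartbeats 1000000 in
lemma sector_lower {ε : ℝ} (hε0 : 0 < ε) (hεπ : ε < Real.pi) {l : ℂ} (hl : l ≠ 0)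
    (harg : |l.arg| < Real.pi - ε) {s : ℝ} (hs : 0 < s) {t : ℂ}
    (ht : ‖t - (s : ℂ)‖ ≤ Real.sin ε / 24 * s) :
    Real.sin ε ^ 2 / 360 * (‖l‖ + s ^ 2) ≤
      ‖l + t ^ 2‖ + (l + t ^ 2).re := by
  set σ := Real.sin ε with hσdef
  have hσ0 : 0 < σ := Real.sin_pos_of_pos_of_lt_pi hε0 hεπ
  have hσ1 : σ ≤ 1 := Real.sin_le_one ε
  set A := ‖l‖ with hAdef
  have hA0 : 0 < A := norm_pos_iff.mpr hl
  -- basic facts about t²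
  have ht3 : ‖t ^ 2 - (s : ℂ) ^ 2‖ ≤ σ / 8 * s ^ 2 := by
    have e1 : t ^ 2 - (s : ℂ) ^ 2 = (t - s) * (t + s) := by ring
    have h1 : ‖t + s‖ ≤ 3 * s := by
      have e2 : t + (s : ℂ) = (t - s) + 2 * s := by ring
      rw [e2]
      refine (norm_add_le _ _).trans ?_
      have e3 : ‖2 * (s : ℂ)‖ = 2 * s := by
        rw [norm_mul, Complex.norm_two, Complex.norm_real, Real.norm_eq_abs, abs_of_pos hs]
      rw [e3]
      nlinarith
    rw [e1, norm_mul]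
    calc ‖t - s‖ * ‖t + s‖ ≤ (σ / 24 * s) * (3 * s) := by
          apply mul_le_mul ht h1 (norm_nonneg _) (by positivity)
      _ = σ / 8 * s ^ 2 := by ring
  have hsre : (((s : ℝ) : ℂ) ^ 2).re = s ^ 2 := by
    rw [← Complex.ofReal_pow, Complex.ofReal_re]
  have hsim : (((s : ℝ) : ℂ) ^ 2).im = 0 := by
    rw [← Complex.ofReal_pow, Complex.ofReal_im]
  have hre2 : |(t ^ 2).re - s ^ 2| ≤ σ / 8 * s ^ 2 := by
    have h := (Complex.abs_re_le_norm (t ^ 2 - (s : ℂ) ^ 2)).trans ht3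
    rwa [Complex.sub_re, hsre] at h
  have him2 : |(t ^ 2).im| ≤ σ / 8 * s ^ 2 := by
    have h := (Complex.abs_im_le_norm (t ^ 2 - (s : ℂ) ^ 2)).trans ht3
    rwa [Complex.sub_im, hsim, sub_zero] at h
  set z := l + t ^ 2 with hzdef
  have hzre : z.re = l.re + (t ^ 2).re := Complex.add_re _ _
  have hzim : z.im = l.im + (t ^ 2).im := Complex.add_im _ _
  have habsz_re : |z.re| ≤ ‖z‖ := Complex.abs_re_le_norm z
  have habsz_im : |z.im| ≤ ‖z‖ := Complex.abs_im_le_norm z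
  have habsz_le : ‖z‖ ≤ A + 2 * s ^ 2 := by
    refine (norm_add_le _ _).trans ?_
    have h4 : ‖t ^ 2‖ ≤ 2 * s ^ 2 := by
      have e : t ^ 2 = (t ^ 2 - (s : ℂ) ^ 2) + (s : ℂ) ^ 2 := by ring
      rw [e]
      refine (norm_add_le _ _).trans ?_
      have e5 : ‖(s : ℂ) ^ 2‖ = s ^ 2 := by
        rw [← Complex.ofReal_pow, Complex.norm_real, Real.norm_eq_abs, abs_of_pos (by positivity)]
      rw [e5]
      nlinarith
    linarith
  have hlre : |l.re| ≤ A := Complex.abs_re_le_norm l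
  have hlim : |l.im| ≤ A := Complex.abs_im_le_norm l
  have habsz0 : 0 ≤ ‖z‖ := norm_nonneg z
  have hrelow : l.re + s ^ 2 - σ / 8 * s ^ 2 ≤ z.re := by
    rw [hzre]
    have := abs_le.mp hre2
    linarith [this.1]
  have hzre_abs : z.re ≤ ‖z‖ := (le_abs_self _).trans habsz_re
  have hzre_neg : -z.re ≤ ‖z‖ := (neg_le_abs _).trans habsz_re
  have hzim_low : |l.im| - σ / 8 * s ^ 2 ≤ |z.im| := by
    rw [hzim]
    have h := abs_sub_abs_le_abs_sub l.im (-(t ^ 2).im)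
    rw [abs_neg, sub_neg_eq_add] at h
    linarith
  have hσsq : σ ^ 2 ≤ 1 := by nlinarith
  -- dichotomy from the sector condition
  have hdich : 0 ≤ l.re ∨ σ * A ≤ |l.im| := by
    by_cases h : 0 ≤ l.re
    · exact Or.inl h
    · right
      push_neg at h
      have hcos : Real.cos l.arg < 0 := by
        have hc := Complex.cos_arg hl
        rw [hc]
        exact div_neg_of_neg_of_pos h hA0
      have hhalf : Real.pi / 2 < |l.arg| := by
        by_contra hc
        push_neg at hc
        have habs := abs_le.mp hc
        have : 0 ≤ Real.cos l.arg :=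
          Real.cos_nonneg_of_mem_Icc ⟨by linarith [habs.1], habs.2⟩
        linarith
      have hsinmono : σ ≤ Real.sin |l.arg| := by
        have e1 : Real.sin |l.arg| = Real.cos (|l.arg| - Real.pi / 2) := by
          rw [← Real.cos_pi_div_two_sub, ← Real.cos_neg]
          ring_nf
        have e2 : σ = Real.cos ((Real.pi - ε) - Real.pi / 2) := by
          rw [hσdef, ← Real.sin_pi_sub, ← Real.cos_pi_div_two_sub, ← Real.cos_neg]
          ring_nf
        rw [e1, e2]
        apply Real.cos_le_cos_of_nonneg_of_le_pi
        · linarith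
        · linarith [Real.pi_pos]
        · linarith
      have himl : l.im = A * Real.sin l.arg := by
        have hsin := Complex.sin_arg l
        rw [hsin, ← hAdef]; field_simp
      have hsinabs : |l.im| = A * Real.sin |l.arg| := by
        rcases le_or_gt 0 l.arg with h1 | h1
        · rw [abs_of_nonneg h1]
          have hsn : 0 ≤ Real.sin l.arg :=
            Real.sin_nonneg_of_nonneg_of_le_pi h1 (Complex.arg_le_pi l)
          rw [himl, abs_of_nonneg (mul_nonneg hA0.le hsn)]
        · have hsneg : Real.sin l.arg ≤ 0 := by
            have h2 := Real.sin_nonneg_of_nonneg_of_le_pi (x := -l.arg)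
              (by linarith) (by linarith [Complex.neg_pi_lt_arg l])
            rw [Real.sin_neg] at h2
            linarith
          rw [abs_of_neg h1, Real.sin_neg, himl,
            abs_of_nonpos (mul_nonpos_of_nonneg_of_nonpos hA0.le hsneg)]
          ring
      rw [hsinabs, mul_comm]
      exact mul_le_mul_of_nonneg_left hsinmono hA0.le
  have hσs : (0:ℝ) ≤ (1 - σ) * s ^ 2 := mul_nonneg (by linarith) (sq_nonneg s)
  have hσA : (0:ℝ) ≤ (1 - σ ^ 2) * (A + s ^ 2) := mul_nonneg (by linarith) (by positivity)
  rcases hdich with hre | him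
  · -- Case 1 : Re l ≥ 0
    have hAle : A ≤ l.re + |l.im| := by
      have h1 : A ^ 2 = l.re ^ 2 + l.im ^ 2 := by
        rw [hAdef, Complex.sq_norm, Complex.normSq_apply]; ring
      nlinarith [sq_abs l.im, mul_nonneg hre (abs_nonneg l.im), abs_nonneg l.im]
    have p2 : |l.im| - σ / 8 * s ^ 2 ≤ ‖z‖ := le_trans hzim_low habsz_im
    linarith
  · -- Case 2
    rcases lt_or_ge A (s ^ 2 / 4) with hA4 | hA4
    · -- A < s²/4
      have p4 : -A ≤ l.re := by linarith [abs_le.mp hlre |>.1]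
      linarith
    · -- s² ≤ 4A
      have him_z : σ * A / 2 ≤ |z.im| := by
        have h2 : σ * s ^ 2 ≤ σ * (4 * A) := by
          apply mul_le_mul_of_nonneg_left (by linarith) hσ0.le
        linarith
      have hsq : (‖z‖) ^ 2 = z.re ^ 2 + z.im ^ 2 := by
        rw [Complex.sq_norm, Complex.normSq_apply]; ring
      have hPQ : (‖z‖ + z.re) * (‖z‖ - z.re) = z.im ^ 2 := by
        linear_combination hsq
      have hP0 : 0 ≤ ‖z‖ + z.re := by linarith
      have him_sq : (σ * A / 2) ^ 2 ≤ z.im ^ 2 := by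
        rw [← sq_abs z.im]
        exact pow_le_pow_left₀ (by positivity) him_z 2
      have hQle : ‖z‖ - z.re ≤ 18 * A := by linarith
      have key : σ ^ 2 * A ^ 2 / 4 ≤ 18 * A * (‖z‖ + z.re) := by
        have h1 : z.im ^ 2 ≤ (‖z‖ + z.re) * (18 * A) :=
          hPQ ▸ mul_le_mul_of_nonneg_left hQle hP0
        nlinarith [him_sq]
      have key2 : σ ^ 2 * A / 72 ≤ ‖z‖ + z.re := by
        nlinarith [key, mul_pos hA0 hA0, hA0]
      have hfin : σ ^ 2 / 360 * (A + s ^ 2) ≤ σ ^ 2 * A / 72 := by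
        nlinarith [mul_nonneg (sq_nonneg σ) (by linarith : (0:ℝ) ≤ 4 * A - s ^ 2)]
      linarith

/-- derivatives in `s` of `e^{-y√(λ+s²)}` satisfy the (M*)-type bounds. -/
theorem stmt_11 (ε ω : ℝ) (hε : ε ∈ Set.Ioo 0 Real.pi) (hω : 0 < ω) (k : ℕ) :
    ∃ cₖ δ : ℝ, 0 < cₖ ∧ 0 < δ ∧
      ∀ l ∈ SigmaSector ε, ω ≤ ‖l‖ → ∀ s y : ℝ, 0 < s → 0 ≤ y →
        (1 + y) * s ^ k *
            ‖iteratedDeriv k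
              (fun t : ℝ => Complex.exp (-(y:ℂ) * csqrt (l + (t:ℂ)^2))) s‖ ≤
          cₖ * Real.exp (-δ * s * y) := by
  obtain ⟨hε0, hεπ⟩ := hε
  set σ := Real.sin ε with hσdef
  have hσ0 : 0 < σ := Real.sin_pos_of_pos_of_lt_pi hε0 hεπ
  set θ : ℝ := σ / 24 with hθdef
  have hθ0 : 0 < θ := by positivity
  set c₂ : ℝ := σ ^ 2 / 360 with hc₂def
  have hc₂0 : 0 < c₂ := by positivity
  set δ : ℝ := Real.sqrt (c₂ / 2) / 2 with hδdef
  have hδ0 : 0 < δ := by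
    have : 0 < Real.sqrt (c₂ / 2) := Real.sqrt_pos.mpr (by positivity)
    positivity
  set β : ℝ := Real.sqrt (c₂ * ω / 2) / 2 with hβdef
  have hβ0 : 0 < β := by
    have : 0 < Real.sqrt (c₂ * ω / 2) := Real.sqrt_pos.mpr (by positivity)
    positivity
  have hfac : (0:ℝ) < (k.factorial : ℝ) := by exact_mod_cast k.factorial_pos
  clear_value σ θ c₂ δ β
  refine ⟨(1 + 1/β) * (k.factorial : ℝ) / θ ^ k, δ, by positivity, hδ0, ?_⟩
  rintro l ⟨hl0, harg⟩ hωl s y hs hy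
  set F : ℂ → ℂ := fun t => Complex.exp (-(y:ℂ) * csqrt (l + t ^ 2)) with hFdef
  -- lower bound for the real part on the closed ball
  have hsector : ∀ t ∈ Metric.closedBall (s : ℂ) (θ * s),
      c₂ * (‖l‖ + s ^ 2) ≤ ‖l + t ^ 2‖ + (l + t ^ 2).re := by
    intro t htm
    rw [Metric.mem_closedBall, Complex.dist_eq] at htm
    rw [hθdef, hσdef] at htm
    rw [hc₂def, hσdef]
    exact sector_lower hε0 hεπ hl0 harg hs htm
  have hz0 : ∀ t ∈ Metric.closedBall (s : ℂ) (θ * s), l + t ^ 2 ≠ 0 := by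
    intro t htm h0
    have h := hsector t htm
    rw [h0] at h
    simp only [norm_zero, Complex.zero_re, add_zero] at h
    nlinarith [norm_pos_iff.mpr hl0]
  have hslit : ∀ t ∈ Metric.closedBall (s : ℂ) (θ * s), l + t ^ 2 ∈ Complex.slitPlane := by
    intro t htm
    rw [Complex.mem_slitPlane_iff]
    by_contra hcon
    push_neg at hcon
    obtain ⟨h1, h2⟩ := hcon
    have habs : ‖l + t ^ 2‖ = |(l + t ^ 2).re| := by
      rw [Complex.norm_def, Complex.normSq_apply, h2]
      rw [mul_zero, add_zero, Real.sqrt_mul_self_eq_abs]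
    have h := hsector t htm
    rw [habs, abs_of_nonpos h1] at h
    nlinarith [norm_pos_iff.mpr hl0]
  have hre_low : ∀ t ∈ Metric.closedBall (s : ℂ) (θ * s),
      β + δ * s ≤ (csqrt (l + t ^ 2)).re := by
    intro t htm
    have hm : c₂ * (ω + s ^ 2) ≤ ‖l + t ^ 2‖ + (l + t ^ 2).re := by
      refine le_trans ?_ (hsector t htm)
      apply mul_le_mul_of_nonneg_left (by linarith) hc₂0.le
    have hge := re_csqrt_ge (by positivity) hm (hz0 t htm)
    refine le_trans ?_ hge
    have e1 : Real.sqrt (c₂ * ω / 2) ≤ Real.sqrt (c₂ * (ω + s ^ 2) / 2) :=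
      Real.sqrt_le_sqrt (by nlinarith)
    have e2 : Real.sqrt (c₂ / 2) * s ≤ Real.sqrt (c₂ * (ω + s ^ 2) / 2) := by
      have e3 : Real.sqrt (c₂ / 2) * s = Real.sqrt (c₂ / 2 * s ^ 2) := by
        rw [Real.sqrt_mul (by positivity), Real.sqrt_sq hs.le]
      rw [e3]
      exact Real.sqrt_le_sqrt (by nlinarith)
    rw [hβdef, hδdef]
    linarith
  -- norm bound on the closed ball
  have hnorm : ∀ t ∈ Metric.closedBall (s : ℂ) (θ * s),
      ‖F t‖ ≤ Real.exp (-(β * y)) * Real.exp (-(δ * s * y)) := by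
    intro t htm
    rw [hFdef]
    simp only
    rw [Complex.norm_exp]
    rw [← Real.exp_add]
    apply Real.exp_le_exp.mpr
    have hre : (-(y:ℂ) * csqrt (l + t ^ 2)).re = -(y * (csqrt (l + t ^ 2)).re) := by
      simp [Complex.mul_re]
    rw [hre]
    have := hre_low t htm
    nlinarith
  -- differentiability
  have hdiff : DifferentiableOn ℂ F (Metric.closedBall (s : ℂ) (θ * s)) := by
    intro t htm
    apply DifferentiableAt.differentiableWithinAt
    have h1 : DifferentiableAt ℂ (fun t : ℂ => l + t ^ 2) t :=
      (differentiableAt_const l).add (differentiableAt_pow 2)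
    have h2 : DifferentiableAt ℂ (fun t : ℂ => csqrt (l + t ^ 2)) t := by
      simp only [csqrt]
      exact h1.cpow (differentiableAt_const _) (hslit t htm)
    exact ((h2.const_mul (-(y:ℂ))).cexp)
  -- Cauchy estimate
  have hcauchy : ‖iteratedDeriv k F (s : ℂ)‖ ≤
      (k.factorial : ℝ) * (Real.exp (-(β * y)) * Real.exp (-(δ * s * y))) / (θ * s) ^ k :=
    cauchy_est (by positivity) hdiff hnorm k
  -- identification of real and complex iterated derivatives
  have hid : iteratedDeriv k (fun t : ℝ => Complex.exp (-(y:ℂ) * csqrt (l + (t:ℂ) ^ 2))) s =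
      iteratedDeriv k F (s : ℂ) := by
    apply iteratedDeriv_comp_ofReal' Metric.isOpen_ball
      (hdiff.mono Metric.ball_subset_closedBall) k
    exact Metric.mem_ball_self (by positivity)
  rw [hid]
  -- final computation
  have h1y : (1 + y) * Real.exp (-(β * y)) ≤ 1 + 1/β := by
    have hb1 : Real.exp (-(β * y)) ≤ 1 := Real.exp_le_one_iff.mpr (by nlinarith)
    have hb2 : y * Real.exp (-(β * y)) ≤ 1/β := by
      rw [Real.exp_neg]
      have hp : (0:ℝ) < Real.exp (β * y) := Real.exp_pos _
      have hd : y ≤ Real.exp (β * y) / β := by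
        rw [le_div_iff₀ hβ0]
        nlinarith [Real.add_one_le_exp (β * y)]
      calc y * (Real.exp (β * y))⁻¹ ≤ (Real.exp (β * y) / β) * (Real.exp (β * y))⁻¹ :=
            mul_le_mul_of_nonneg_right hd (by positivity)
        _ = 1/β := by field_simp
    calc (1 + y) * Real.exp (-(β * y)) = Real.exp (-(β * y)) + y * Real.exp (-(β * y)) := by ring
      _ ≤ 1 + 1/β := add_le_add hb1 hb2
  have hexp : -δ * s * y = -(δ * s * y) := by ring
  rw [hexp]
  calc (1 + y) * s ^ k * ‖iteratedDeriv k F (s : ℂ)‖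
      ≤ (1 + y) * s ^ k *
        ((k.factorial : ℝ) * (Real.exp (-(β * y)) * Real.exp (-(δ * s * y))) / (θ * s) ^ k) := by
        apply mul_le_mul_of_nonneg_left hcauchy (by positivity)
    _ = ((1 + y) * Real.exp (-(β * y))) *
        ((k.factorial : ℝ) * Real.exp (-(δ * s * y)) / θ ^ k) := by
        rw [mul_pow]
        field_simp
    _ ≤ (1 + 1/β) * ((k.factorial : ℝ) * Real.exp (-(δ * s * y)) / θ ^ k) := by
        apply mul_le_mul_of_nonneg_right h1y (by positivity)
    _ = (1 + 1/β) * (k.factorial : ℝ) / θ ^ k * Real.exp (-(δ * s * y)) := by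
        ring
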